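/- For all positive integers m and n, every subdivision of the m×n grid graph has twin-width at most 4. -/

import Mathlib

namespace TwwPaper

open Finset

/-! ### Twin-width via contraction (partition-merge) sequences -/

/-- Two parts `P`, `Q` are *pure* (homogeneous) in `G`: the graph is either complete or empty
between them.  In the trigraph of a partition, a non-pure pair of parts is joined by a red edge. -/
def Pure {V : Type*} (G : SimpleGraph V) (P Q : Finset V) : Prop :=
  (∀ x ∈ P, ∀ y ∈ Q, G.Adj x y) ∨ (∀ x ∈ P, ∀ y ∈ Q, ¬ G.Adj x y)

/-- The red degree of a part `P` in the partition `PP`: the number of other parts that are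
not pure with respect to `P`. -/
noncomputable def redDeg {V : Type*} (G : SimpleGraph V) (PP : Finset (Finset V)) (P : Finset V) : ℕ :=
  {Q | Q ∈ PP ∧ Q ≠ P ∧ ¬ Pure G P Q}.ncard

/-- `QQ` is obtained from `PP` by merging (contracting) two parts. -/
def Merge {V : Type*} [DecidableEq V] (PP QQ : Finset (Finset V)) : Prop :=
  ∃ A ∈ PP, ∃ B ∈ PP, A ≠ B ∧ QQ = insert (A ∪ B) ((PP.erase A).erase B)

/-- One contraction step keeping every red degree at most `d`. -/
def Step {V : Type*} [DecidableEq V] (G : SimpleGraph V) (d : ℕ) (PP QQ : Finset (Finset V)) :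
    Prop :=
  Merge PP QQ ∧ ∀ P ∈ QQ, redDeg G QQ P ≤ d

/-- `G` admits a `d`-contraction sequence: starting from the partition into singletons one can
merge two parts at a time, always keeping all red degrees at most `d`, until one part remains. -/
def TwwLE {V : Type*} [Fintype V] [DecidableEq V] (G : SimpleGraph V) (d : ℕ) : Prop :=
  Relation.ReflTransGen (Step G d)
    (Finset.univ.image fun v => ({v} : Finset V)) {Finset.univ}

/-- The twin-width of a finite simple graph. -/
noncomputable def tww {V : Type*} [Fintype V] [DecidableEq V] (G : SimpleGraph V) : ℕ :=
  sInf {d | TwwLE G d}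

/-! ### Minors, separators, subgraph containment -/

/-- `H` is a minor of `G`: there is a minor model, i.e. pairwise disjoint nonempty connected
branch sets, one for each vertex of `H`, with an edge of `G` between the branch sets of any two
adjacent vertices of `H`. -/
def IsMinor {α β : Type*} (H : SimpleGraph α) (G : SimpleGraph β) : Prop :=
  ∃ f : α → Set β,
    (∀ a, (f a).Nonempty) ∧
    (∀ a, (G.induce (f a)).Connected) ∧
    (∀ a b, a ≠ b → Disjoint (f a) (f b)) ∧
    ∀ a b, H.Adj a b → ∃ x ∈ f a, ∃ y ∈ f b, G.Adj x y

/-- `S` is a separator of `G` : deleting `S` leaves a nonempty disconnected graph. -/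
def Sep {α : Type*} (G : SimpleGraph α) (S : Set α) : Prop :=
  (Sᶜ : Set α).Nonempty ∧ ¬ (G.induce Sᶜ).Preconnected

/-- `G` contains `F` as a (not necessarily induced) subgraph. -/
def ContainsSubgraph {α β : Type*} (G : SimpleGraph β) (F : SimpleGraph α) : Prop :=
  ∃ f : α → β, Function.Injective f ∧ ∀ a b, F.Adj a b → G.Adj (f a) (f b)

/-- `G` is internally 4-connected. -/
def Internally4Connected {α : Type*} [Fintype α] (G : SimpleGraph α) : Prop :=
  5 ≤ Fintype.card α ∧
  (∀ S : Set α, S.ncard < 3 → ¬ Sep G S) ∧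
  ∀ S : Set α, S.ncard = 3 → Sep G S →
    (∀ a ∈ S, ∀ b ∈ S, ¬ G.Adj a b) ∧ ∃ v ∉ S, G.neighborSet v = S

/-! ### The concrete graphs -/

/-- `K₆` minus one edge. -/
def K6minus : SimpleGraph (Fin 6) where
  Adj a b := a ≠ b ∧ ¬(({a, b} : Finset (Fin 6)) = {0, 1})
  symm := by
    constructor
    rintro a b ⟨h1, h2⟩
    exact ⟨h1.symm, by rwa [Finset.pair_comm]⟩
  loopless := ⟨fun a h => h.1 rfl⟩

/-- The complement of the 7-cycle. -/
def C7c : SimpleGraph (Fin 7) := (SimpleGraph.cycleGraph 7)ᶜ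

/-- Join of two graphs. -/
def joinG {α β : Type*} (G : SimpleGraph α) (H : SimpleGraph β) : SimpleGraph (α ⊕ β) where
  Adj x y :=
    match x, y with
    | Sum.inl a, Sum.inl b => G.Adj a b
    | Sum.inr a, Sum.inr b => H.Adj a b
    | _, _ => True
  symm := by
    constructor
    rintro (a | a) (b | b) h
    · exact G.symm.symm _ _ h
    · exact trivial
    · exact trivial
    · exact H.symm.symm _ _ h
  loopless := by
    constructor
    rintro (a | a) h
    · exact G.loopless.irrefl a h
    · exact H.loopless.irrefl a h

/-- The join of `C₅` with the complement of `K₂` (two isolated vertices). -/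
def C5K2c : SimpleGraph (Fin 5 ⊕ Fin 2) :=
  joinG (SimpleGraph.cycleGraph 5) (⊥ : SimpleGraph (Fin 2))

/-- The part of a vertex of `K_{3,1,3}`: `{0,1,2}`, `{3}`, `{4,5,6}`. -/
def triPart : Fin 7 → ℕ := fun a => if a.val < 3 then 0 else if a.val = 3 then 1 else 2

/-- `K_{3,1̂,3}`: the complete tripartite graph `K_{3,1,3}` minus one edge from the middle
vertex `3` to each of the two size-3 parts (the edges `{0,3}` and `{3,4}`). -/
def K313hat : SimpleGraph (Fin 7) where
  Adj a b := triPart a ≠ triPart b ∧ ¬(({a, b} : Finset (Fin 7)) = {0, 3}) ∧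
    ¬(({a, b} : Finset (Fin 7)) = {3, 4})
  symm := by
    constructor
    rintro a b ⟨h1, h2, h3⟩
    refine ⟨h1.symm, ?_, ?_⟩ <;> rwa [Finset.pair_comm]
  loopless := ⟨fun a h => h.1 rfl⟩

/-- The cube graph `Q₃`. -/
def Q3 : SimpleGraph (Fin 2 × Fin 2 × Fin 2) where
  Adj x y := (x.1 ≠ y.1 ∧ x.2 = y.2) ∨ (x.1 = y.1 ∧ x.2.1 ≠ y.2.1 ∧ x.2.2 = y.2.2) ∨
    (x.1 = y.1 ∧ x.2.1 = y.2.1 ∧ x.2.2 ≠ y.2.2)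
  symm := by
    constructor
    rintro x y (⟨h1, h2⟩ | ⟨h1, h2, h3⟩ | ⟨h1, h2, h3⟩)
    · exact Or.inl ⟨h1.symm, h2.symm⟩
    · exact Or.inr (Or.inl ⟨h1.symm, h2.symm, h3.symm⟩)
    · exact Or.inr (Or.inr ⟨h1.symm, h2.symm, h3.symm⟩)
  loopless := by
    constructor
    rintro x (⟨h, -⟩ | ⟨-, h, -⟩ | ⟨-, -, h⟩) <;> exact h rfl

/-- The Wagner graph `V₈`: the 8-cycle plus the four main diagonals. -/
def V8 : SimpleGraph (Fin 8) where
  Adj a b := a ≠ b ∧ (b = a + 1 ∨ a = b + 1 ∨ b = a + 4)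
  symm := by
    constructor
    rintro a b ⟨h, h1 | h1 | h1⟩
    · exact ⟨h.symm, Or.inr (Or.inl h1)⟩
    · exact ⟨h.symm, Or.inl h1⟩
    · refine ⟨h.symm, Or.inr (Or.inr ?_)⟩
      subst h1
      have h4 : (4 : Fin 8) + 4 = 0 := by decide
      rw [add_assoc, h4, add_zero]
  loopless := by constructor; rintro a ⟨h, -⟩; exact h rfl

/-- `K₆` minus a perfect matching (`K₆^≡`), i.e. the octahedron `K_{2,2,2}`. -/
def K6mm3 : SimpleGraph (Fin 6) where
  Adj a b := a.val % 3 ≠ b.val % 3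
  symm := ⟨fun _ _ h => h.symm⟩
  loopless := ⟨fun _ h => h rfl⟩

/-- `K₆` minus a matching of size two (`K₆^=`). -/
def K6mm2 : SimpleGraph (Fin 6) where
  Adj a b := a ≠ b ∧ ¬(({a, b} : Finset (Fin 6)) = {0, 3}) ∧
    ¬(({a, b} : Finset (Fin 6)) = {1, 4})
  symm := by
    constructor
    rintro a b ⟨h1, h2, h3⟩
    refine ⟨h1.symm, ?_, ?_⟩ <;> rwa [Finset.pair_comm]
  loopless := ⟨fun a h => h.1 rfl⟩

/-- The join of the complement of `C₆` with a single vertex. -/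
def C6cK1 : SimpleGraph (Fin 6 ⊕ Fin 1) :=
  joinG ((SimpleGraph.cycleGraph 6)ᶜ) (⊥ : SimpleGraph (Fin 1))

/-- A perfect matching graph on `Fin m` (`m` even): `2i` is matched to `2i+1`. -/
def matchingGraph (m : ℕ) : SimpleGraph (Fin m) where
  Adj a b := a ≠ b ∧ a.val / 2 = b.val / 2
  symm := ⟨fun _ _ h => ⟨h.1.symm, h.2.symm⟩⟩
  loopless := ⟨fun _ h => h.1 rfl⟩

/-- The `m × n` grid graph. -/
def gridGraph (m n : ℕ) : SimpleGraph (Fin m × Fin n) where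
  Adj p q := (p.1 = q.1 ∧ (p.2.val + 1 = q.2.val ∨ q.2.val + 1 = p.2.val)) ∨
    (p.2 = q.2 ∧ (p.1.val + 1 = q.1.val ∨ q.1.val + 1 = p.1.val))
  symm := by
    constructor
    rintro p q (⟨h1, h2⟩ | ⟨h1, h2⟩)
    · exact Or.inl ⟨h1.symm, h2.symm⟩
    · exact Or.inr ⟨h1.symm, h2.symm⟩
  loopless := by constructor; rintro p (⟨-, h | h⟩ | ⟨-, h | h⟩) <;> omega

/-! ### `(Δ,Y)`-operation -/

/-- The `(Δ,Y)`-operation on the triangle `{x,y,z}` of `G`: delete the edges of the triangle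
and add a new vertex (`none`) adjacent exactly to `x`, `y`, `z`. -/
def deltaY {α : Type*} (G : SimpleGraph α) (x y z : α) : SimpleGraph (Option α) where
  Adj a b :=
    match a, b with
    | some a, some b => G.Adj a b ∧ ¬((a = x ∨ a = y ∨ a = z) ∧ (b = x ∨ b = y ∨ b = z))
    | some a, none => a = x ∨ a = y ∨ a = z
    | none, some b => b = x ∨ b = y ∨ b = z
    | none, none => False
  symm := by
    constructor
    rintro (_ | a) (_ | b) h
    · exact h.elim
    · exact h
    · exact h
    · exact ⟨h.1.symm, fun hc => h.2 ⟨hc.2, hc.1⟩⟩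
  loopless := by
    constructor
    rintro (_ | a) h
    · exact h
    · exact G.loopless.irrefl a h.1

/-- `G` has a spanning subgraph isomorphic to a member of
`𝓕₃ = {K₆⁻, C₇ᶜ, C₅ + K₂ᶜ, K_{3,1̂,3}, Q₃, V₈}`. -/
def HasSpanningF3 {α : Type*} (G : SimpleGraph α) : Prop :=
  ∃ H : SimpleGraph α, H ≤ G ∧
    (Nonempty (H ≃g K6minus) ∨ Nonempty (H ≃g C7c) ∨ Nonempty (H ≃g C5K2c) ∨
      Nonempty (H ≃g K313hat) ∨ Nonempty (H ≃g Q3) ∨ Nonempty (H ≃g V8))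

/-- `G` has a minor in `𝓕₃`. -/
def HasF3Minor {α : Type*} (G : SimpleGraph α) : Prop :=
  IsMinor K6minus G ∨ IsMinor C7c G ∨ IsMinor C5K2c G ∨ IsMinor K313hat G ∨
    IsMinor Q3 G ∨ IsMinor V8 G

/-! ### Subdivisions -/

/-- Vertices of the subdivision of `G` in which the edge `ab` (with `a < b`) receives
`ℓ a b` internal (subdivision) vertices: the original vertices plus, for each oriented edge,
`ℓ a b` new vertices. -/
def SubdivVert {α : Type*} [LT α] (G : SimpleGraph α) (ℓ : α → α → ℕ) : Type _ :=
  α ⊕ Σ e : {p : α × α // p.1 < p.2 ∧ G.Adj p.1 p.2}, Fin (ℓ e.1.1 e.1.2)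

noncomputable instance SubdivVert.instFintype {α : Type*} [LT α] [Fintype α]
    (G : SimpleGraph α) (ℓ : α → α → ℕ) : Fintype (SubdivVert G ℓ) := by
  classical
  unfold SubdivVert
  infer_instance

noncomputable instance SubdivVert.instDecidableEq {α : Type*} [LT α] [DecidableEq α]
    (G : SimpleGraph α) (ℓ : α → α → ℕ) : DecidableEq (SubdivVert G ℓ) := by
  classical
  unfold SubdivVert
  infer_instance

/-- The subdivision of `G` in which each edge `ab` (`a < b`) is replaced by a path with
`ℓ a b` internal vertices (so of length `ℓ a b + 1`); an edge with `ℓ a b = 0` stays an edge. -/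
def Subdiv {α : Type*} [LT α] (G : SimpleGraph α) (ℓ : α → α → ℕ) :
    SimpleGraph (SubdivVert G ℓ) where
  Adj x y :=
    match x, y with
    | Sum.inl a, Sum.inl b =>
        G.Adj a b ∧ ((a < b ∧ ℓ a b = 0) ∨ (b < a ∧ ℓ b a = 0))
    | Sum.inl a, Sum.inr ei =>
        (a = ei.1.1.1 ∧ (ei.2 : ℕ) = 0) ∨ (a = ei.1.1.2 ∧ (ei.2 : ℕ) + 1 = ℓ ei.1.1.1 ei.1.1.2)
    | Sum.inr ei, Sum.inl a =>
        (a = ei.1.1.1 ∧ (ei.2 : ℕ) = 0) ∨ (a = ei.1.1.2 ∧ (ei.2 : ℕ) + 1 = ℓ ei.1.1.1 ei.1.1.2)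
    | Sum.inr ei, Sum.inr ej =>
        ei.1 = ej.1 ∧ ((ei.2 : ℕ) + 1 = (ej.2 : ℕ) ∨ (ej.2 : ℕ) + 1 = (ei.2 : ℕ))
  symm := by
    constructor
    rintro (a | ei) (b | ej) h
    · exact ⟨h.1.symm, h.2.symm⟩
    · exact h
    · exact h
    · exact ⟨h.1.symm, h.2.symm⟩
  loopless := by
    constructor
    rintro (a | ei) h
    · exact G.loopless.irrefl a h.1
    · rcases h.2 with h' | h' <;> omega

/-- Lexicographic order on the vertex set of a grid, used to orient its edges. -/
def lexLT {m n : ℕ} : LT (Fin m × Fin n) :=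
  ⟨fun p q => p.1 < q.1 ∨ (p.1 = q.1 ∧ p.2 < q.2)⟩


/-! ### Auxiliary machinery: a generic "row sweep" contraction strategy -/

set_option linter.unusedSectionVars false

section SweepAux

variable {V : Type*} [Fintype V] [DecidableEq V]

lemma pure_singleton (G : SimpleGraph V) (u v : V) : Pure G {u} {v} := by
  by_cases h : G.Adj u v
  · exact Or.inl (by
      intro x hx y hy
      rw [Finset.mem_singleton] at hx hy
      subst hx; subst hy; exact h)
  · exact Or.inr (by
      intro x hx y hy
      rw [Finset.mem_singleton] at hx hy
      subst hx; subst hy; exact h)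

lemma exists_adj_of_not_pure {G : SimpleGraph V} {P Q : Finset V} (h : ¬ Pure G P Q) :
    ∃ x ∈ P, ∃ y ∈ Q, G.Adj x y := by
  unfold Pure at h
  push_neg at h
  obtain ⟨x, hx, y, hy, hxy⟩ := h.2
  exact ⟨x, hx, y, hy, hxy⟩

lemma part_eq_of_mem {PP : Finset (Finset V)}
    (hdisj : ∀ P ∈ PP, ∀ Q ∈ PP, P ≠ Q → Disjoint P Q)
    {Q Q' : Finset V} (hQ : Q ∈ PP) (hQ' : Q' ∈ PP) {a : V} (ha : a ∈ Q) (ha' : a ∈ Q') :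
    Q = Q' := by
  by_contra hne
  exact (Finset.disjoint_left.mp (hdisj Q hQ Q' hQ' hne) ha) ha'

lemma redDeg_le_of_cover (G : SimpleGraph V) {PP : Finset (Finset V)} {P : Finset V}
    (f : Fin 4 → Set V)
    (huniq : ∀ j : Fin 4, ∀ Q ∈ PP, ∀ Q' ∈ PP,
      (∃ a ∈ Q, a ∈ f j) → (∃ a ∈ Q', a ∈ f j) → Q = Q')
    (hcov : ∀ Q ∈ PP, Q ≠ P → ¬ Pure G P Q → ∃ j : Fin 4, ∃ a ∈ Q, a ∈ f j) :
    redDeg G PP P ≤ 4 := by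
  classical
  have key : {Q | Q ∈ PP ∧ Q ≠ P ∧ ¬ Pure G P Q}.ncard ≤ (Set.univ : Set (Fin 4)).ncard := by
    apply Set.ncard_le_ncard_of_injOn
      (fun Q => if h : ∃ j : Fin 4, ∃ a ∈ Q, a ∈ f j then h.choose else 0)
    · intro Q _; exact Set.mem_univ _
    · intro Q hQ Q' hQ' hEq
      obtain ⟨hQP, hQne, hQpure⟩ := hQ
      obtain ⟨hQ'P, hQ'ne, hQ'pure⟩ := hQ'
      have h1 : ∃ j : Fin 4, ∃ a ∈ Q, a ∈ f j := hcov Q hQP hQne hQpure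
      have h2 : ∃ j : Fin 4, ∃ a ∈ Q', a ∈ f j := hcov Q' hQ'P hQ'ne hQ'pure
      simp only [dif_pos h1, dif_pos h2] at hEq
      have h2' := h2.choose_spec
      rw [← hEq] at h2'
      exact huniq _ Q hQP Q' hQ'P h1.choose_spec h2'
  have : (Set.univ : Set (Fin 4)).ncard = 4 := by
    simp [Set.ncard_univ]
  rw [this] at key
  exact key

end SweepAux

section Sweep

variable {V : Type*} [Fintype V] [DecidableEq V]
variable (G : SimpleGraph V) (ρ ordv : V → ℕ) (tk : V → Bool) (m : ℕ)

/-- The partially-built row blob: processed vertices of row `i` at time `t`. -/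
def blobF (t i : ℕ) : Finset V := Finset.univ.filter fun v => ρ v = i ∧ ordv v < t

/-- The full row `i`. -/
def rowF (i : ℕ) : Finset V := Finset.univ.filter fun v => ρ v = i

/-- The partition at time `t` of phase 1 of the sweep. -/
def PPQ (t : ℕ) : Finset (Finset V) :=
  ((Finset.univ.filter fun v => t ≤ ordv v).image fun v => ({v} : Finset V)) ∪
    (((Finset.range m).image fun i => blobF ρ ordv t i).filter fun s => s.Nonempty)

/-- The partition in phase 2: rows `0..s` merged, the other rows whole. -/
def Ps (s : ℕ) : Finset (Finset V) :=
  insert (Finset.univ.filter fun v => ρ v ≤ s) ((Finset.Ico (s+1) m).image (rowF ρ))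

variable {ρ ordv m}

lemma mem_blobF {t i : ℕ} {v : V} : v ∈ blobF ρ ordv t i ↔ ρ v = i ∧ ordv v < t := by
  simp [blobF]

lemma mem_rowF {i : ℕ} {v : V} : v ∈ rowF ρ i ↔ ρ v = i := by simp [rowF]

lemma mem_PPQ {t : ℕ} {P : Finset V} : P ∈ PPQ ρ ordv m t ↔
    (∃ v, t ≤ ordv v ∧ P = {v}) ∨ (∃ i, i < m ∧ P = blobF ρ ordv t i ∧ P.Nonempty) := by
  simp only [PPQ, Finset.mem_union, Finset.mem_image, Finset.mem_filter, Finset.mem_range,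
    Finset.mem_univ, true_and]
  constructor
  · rintro (⟨v, hv, rfl⟩ | ⟨⟨i, hi, rfl⟩, hne⟩)
    · exact Or.inl ⟨v, hv, rfl⟩
    · exact Or.inr ⟨i, hi, rfl, hne⟩
  · rintro (⟨v, hv, rfl⟩ | ⟨i, hi, rfl, hne⟩)
    · exact Or.inl ⟨v, hv, rfl⟩
    · exact Or.inr ⟨⟨i, hi, rfl⟩, hne⟩

lemma mem_Ps {s : ℕ} {P : Finset V} : P ∈ Ps ρ m s ↔
    P = (Finset.univ.filter fun v => ρ v ≤ s) ∨ ∃ j, s + 1 ≤ j ∧ j < m ∧ P = rowF ρ j := by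
  simp only [Ps, Finset.mem_insert, Finset.mem_image, Finset.mem_Ico]
  constructor
  · rintro (rfl | ⟨j, ⟨h1, h2⟩, rfl⟩)
    · exact Or.inl rfl
    · exact Or.inr ⟨j, h1, h2, rfl⟩
  · rintro (rfl | ⟨j, h1, h2, rfl⟩)
    · exact Or.inl rfl
    · exact Or.inr ⟨j, ⟨h1, h2⟩, rfl⟩

lemma part_char_PPQ {t : ℕ} {P : Finset V} (hP : P ∈ PPQ ρ ordv m t) {a : V} (ha : a ∈ P) :
    P = if t ≤ ordv a then ({a} : Finset V) else blobF ρ ordv t (ρ a) := by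
  rcases mem_PPQ.mp hP with ⟨v, hv, rfl⟩ | ⟨i, _, rfl, _⟩
  · rw [Finset.mem_singleton] at ha; subst ha
    rw [if_pos hv]
  · obtain ⟨hrow, hlt⟩ := mem_blobF.mp ha
    rw [if_neg (by omega), hrow]

lemma PPQ_disj (t : ℕ) :
    ∀ P ∈ PPQ ρ ordv m t, ∀ Q ∈ PPQ ρ ordv m t, P ≠ Q → Disjoint P Q := by
  intro P hP Q hQ hne
  rw [Finset.disjoint_left]
  intro a haP haQ
  exact hne ((part_char_PPQ hP haP).trans (part_char_PPQ hQ haQ).symm)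

lemma part_char_Ps {s : ℕ} {P : Finset V} (hP : P ∈ Ps ρ m s) {a : V} (ha : a ∈ P) :
    P = if ρ a ≤ s then (Finset.univ.filter fun v => ρ v ≤ s) else rowF ρ (ρ a) := by
  rcases mem_Ps.mp hP with rfl | ⟨j, h1, _, rfl⟩
  · rw [if_pos]
    exact (Finset.mem_filter.mp ha).2
  · have : ρ a = j := mem_rowF.mp ha
    rw [if_neg (by omega), this]

lemma Ps_disj (s : ℕ) : ∀ P ∈ Ps ρ m s, ∀ Q ∈ Ps ρ m s, P ≠ Q → Disjoint P Q := by
  intro P hP Q hQ hne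
  rw [Finset.disjoint_left]
  intro a haP haQ
  exact hne ((part_char_Ps hP haP).trans (part_char_Ps hQ haQ).symm)

lemma meets_blob {t k : ℕ} {Q : Finset V} (hQ : Q ∈ PPQ ρ ordv m t) {a : V} (ha : a ∈ Q)
    (hb : a ∈ blobF ρ ordv t k) : Q = blobF ρ ordv t k := by
  have h := part_char_PPQ hQ ha
  obtain ⟨h1, h2⟩ := mem_blobF.mp hb
  rw [if_neg (by omega)] at h
  rw [h, h1]

lemma redAll (hrlt : ∀ v, ρ v < m)
    (hA : ∀ x y, G.Adj x y → ρ x ≤ ρ y + 1 ∧ ρ y ≤ ρ x + 1)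
    (hB : ∀ x y, G.Adj x y → ρ y + 1 = ρ x → ordv y < ordv x)
    (hC : ∀ t i (y y' : V),
      (t ≤ ordv y ∧ ρ y = i ∧ tk y = true ∧ ∃ x, ρ x = i ∧ ordv x < t ∧ G.Adj x y) →
      (t ≤ ordv y' ∧ ρ y' = i ∧ tk y' = true ∧ ∃ x, ρ x = i ∧ ordv x < t ∧ G.Adj x y') →
      y = y')
    (hD : ∀ t i (y y' : V),
      (t ≤ ordv y ∧ ((ρ y = i ∧ tk y = false) ∨ ρ y = i + 1) ∧
        ∃ x, ρ x = i ∧ ordv x < t ∧ G.Adj x y) →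
      (t ≤ ordv y' ∧ ((ρ y' = i ∧ tk y' = false) ∨ ρ y' = i + 1) ∧
        ∃ x, ρ x = i ∧ ordv x < t ∧ G.Adj x y') →
      y = y')
    (t : ℕ) : ∀ P ∈ PPQ ρ ordv m t, redDeg G (PPQ ρ ordv m t) P ≤ 4 := by
  intro P hP
  have hdisj := PPQ_disj (ρ := ρ) (ordv := ordv) (m := m) t
  rcases mem_PPQ.mp hP with ⟨v, hv, rfl⟩ | ⟨i, him, rfl, hne⟩
  · -- singleton part
    apply redDeg_le_of_cover G
      (f := ![(↑(blobF ρ ordv t (ρ v - 1)) : Set V), ↑(blobF ρ ordv t (ρ v)),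
        ↑(blobF ρ ordv t (ρ v + 1)), ∅])
    · intro j Q hQ Q' hQ' h1 h2
      obtain ⟨a, ha, haf⟩ := h1
      obtain ⟨a', ha', ha'f⟩ := h2
      fin_cases j <;> simp only [Matrix.cons_val_zero, Matrix.cons_val_one, Matrix.head_cons,
        Matrix.cons_val_two, Matrix.tail_cons, Matrix.cons_val_three, Set.mem_empty_iff_false,
        Finset.mem_coe] at haf ha'f
      · rw [meets_blob hQ ha haf, meets_blob hQ' ha' ha'f]
      · rw [meets_blob hQ ha haf, meets_blob hQ' ha' ha'f]
      · rw [meets_blob hQ ha haf, meets_blob hQ' ha' ha'f]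
      · exact absurd haf (by simp)
    · intro Q hQ hne hnp
      obtain ⟨x, hx, y, hy, hadj⟩ := exists_adj_of_not_pure hnp
      rw [Finset.mem_singleton] at hx
      subst hx
      by_cases hty : t ≤ ordv y
      · have hQy : Q = {y} := by
          have := part_char_PPQ hQ hy
          rwa [if_pos hty] at this
        subst hQy
        exact absurd (pure_singleton G x y) hnp
      · have hrows := hA x y hadj
        rcases (by omega : ρ y + 1 = ρ x ∨ ρ y = ρ x ∨ ρ y = ρ x + 1) with h | h | h
        · refine ⟨0, y, hy, ?_⟩
          simp only [Matrix.cons_val_zero, Finset.mem_coe, mem_blobF]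
          omega
        · refine ⟨1, y, hy, ?_⟩
          simp only [Matrix.cons_val_one, Matrix.cons_val_zero, Matrix.head_cons, Finset.mem_coe, mem_blobF]
          omega
        · refine ⟨2, y, hy, ?_⟩
          simp only [Matrix.cons_val_two, Matrix.tail_cons, Matrix.head_cons,
            Finset.mem_coe, mem_blobF]
          omega
  · -- blob part
    apply redDeg_le_of_cover G
      (f := ![(↑(blobF ρ ordv t (i - 1)) : Set V), ↑(blobF ρ ordv t (i + 1)),
        {y | t ≤ ordv y ∧ ρ y = i ∧ tk y = true ∧ ∃ x, ρ x = i ∧ ordv x < t ∧ G.Adj x y},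
        {y | t ≤ ordv y ∧ ((ρ y = i ∧ tk y = false) ∨ ρ y = i + 1) ∧
          ∃ x, ρ x = i ∧ ordv x < t ∧ G.Adj x y}])
    · intro j Q hQ Q' hQ' h1 h2
      obtain ⟨a, ha, haf⟩ := h1
      obtain ⟨a', ha', ha'f⟩ := h2
      fin_cases j <;> simp only [Matrix.cons_val_zero, Matrix.cons_val_one, Matrix.head_cons,
        Matrix.cons_val_two, Matrix.tail_cons, Matrix.cons_val_three, Set.mem_setOf_eq,
        Finset.mem_coe] at haf ha'f
      · rw [meets_blob hQ ha haf, meets_blob hQ' ha' ha'f]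
      · rw [meets_blob hQ ha haf, meets_blob hQ' ha' ha'f]
      · have : a = a' := hC t i a a' haf ha'f
        subst this
        exact part_eq_of_mem hdisj hQ hQ' ha ha'
      · have : a = a' := hD t i a a' haf ha'f
        subst this
        exact part_eq_of_mem hdisj hQ hQ' ha ha'
    · intro Q hQ hneQ hnp
      obtain ⟨x, hx, y, hy, hadj⟩ := exists_adj_of_not_pure hnp
      obtain ⟨hxr, hxo⟩ := mem_blobF.mp hx
      have hyP : y ∉ blobF ρ ordv t i :=
        Finset.disjoint_left.mp (hdisj Q hQ _ hP hneQ) hy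
      rw [mem_blobF] at hyP
      have hrows := hA x y hadj
      by_cases hty : t ≤ ordv y
      · by_cases hry : ρ y = i
        · cases htk : tk y with
          | true =>
            refine ⟨2, y, hy, ?_⟩
            simp only [Matrix.cons_val_two, Matrix.tail_cons, Matrix.head_cons, Set.mem_setOf_eq]
            exact ⟨hty, hry, htk, x, hxr, hxo, hadj⟩
          | false =>
            refine ⟨3, y, hy, ?_⟩
            simp only [Matrix.cons_val_three, Matrix.tail_cons, Matrix.head_cons, Set.mem_setOf_eq]
            exact ⟨hty, Or.inl ⟨hry, htk⟩, x, hxr, hxo, hadj⟩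
        · rcases (by omega : ρ y + 1 = ρ x ∨ ρ y = ρ x + 1) with h | h
          · have := hB x y hadj h
            omega
          · refine ⟨3, y, hy, ?_⟩
            simp only [Matrix.cons_val_three, Matrix.tail_cons, Matrix.head_cons, Set.mem_setOf_eq]
            exact ⟨hty, Or.inr (by omega), x, hxr, hxo, hadj⟩
      · have hry : ρ y ≠ i := fun h => hyP ⟨h, by omega⟩
        rcases (by omega : ρ y + 1 = ρ x ∨ ρ y = ρ x + 1) with h | h
        · refine ⟨0, y, hy, ?_⟩
          simp only [Matrix.cons_val_zero, Finset.mem_coe, mem_blobF]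
          omega
        · refine ⟨1, y, hy, ?_⟩
          simp only [Matrix.cons_val_one, Matrix.cons_val_zero, Matrix.head_cons, Finset.mem_coe, mem_blobF]
          omega

lemma blob_succ_self (hinj : Function.Injective ordv) {v : V} {t : ℕ} (hv : ordv v = t) :
    blobF ρ ordv (t+1) (ρ v) = insert v (blobF ρ ordv t (ρ v)) := by
  ext w
  simp only [mem_blobF, Finset.mem_insert]
  constructor
  · rintro ⟨h1, h2⟩
    by_cases hw : ordv w = t
    · exact Or.inl (hinj (hw.trans hv.symm))
    · exact Or.inr ⟨h1, by omega⟩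
  · rintro (rfl | ⟨h1, h2⟩)
    · exact ⟨rfl, by omega⟩
    · exact ⟨h1, by omega⟩

lemma blob_succ_other (hinj : Function.Injective ordv) {v : V} {t : ℕ} (hv : ordv v = t)
    {i : ℕ} (hi : i ≠ ρ v) : blobF ρ ordv (t+1) i = blobF ρ ordv t i := by
  ext w
  simp only [mem_blobF]
  constructor
  · rintro ⟨h1, h2⟩
    refine ⟨h1, ?_⟩
    by_cases hw : ordv w = t
    · have := hinj (hw.trans hv.symm)
      subst this
      exact absurd h1.symm hi
    · omega
  · rintro ⟨h1, h2⟩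
    exact ⟨h1, by omega⟩

lemma PPQ_succ_none {t : ℕ} (hnv : ∀ v : V, ordv v ≠ t) :
    PPQ ρ ordv m (t+1) = PPQ ρ ordv m t := by
  unfold PPQ
  congr 1
  · congr 1
    apply Finset.filter_congr
    intro v _
    have := hnv v
    constructor <;> intro <;> omega
  · congr 1
    apply Finset.image_congr
    intro i _
    ext w
    simp only [mem_blobF]
    have := hnv w
    constructor <;> rintro ⟨h1, h2⟩ <;> exact ⟨h1, by omega⟩

lemma PPQ_succ_newblob (hinj : Function.Injective ordv) (hrlt : ∀ v, ρ v < m)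
    {v : V} {t : ℕ} (hv : ordv v = t) (hemp : blobF ρ ordv t (ρ v) = ∅) :
    PPQ ρ ordv m (t+1) = PPQ ρ ordv m t := by
  ext P
  rw [mem_PPQ, mem_PPQ]
  constructor
  · rintro (⟨w, hw, rfl⟩ | ⟨i, him, rfl, hneP⟩)
    · exact Or.inl ⟨w, by omega, rfl⟩
    · by_cases hiv : i = ρ v
      · subst hiv
        refine Or.inl ⟨v, by omega, ?_⟩
        rw [blob_succ_self hinj hv, hemp]
        simp
      · exact Or.inr ⟨i, him, blob_succ_other hinj hv hiv, hneP⟩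
  · rintro (⟨w, hw, rfl⟩ | ⟨i, him, rfl, hneP⟩)
    · by_cases hwv : w = v
      · subst hwv
        refine Or.inr ⟨ρ w, hrlt w, ?_, by simp⟩
        rw [blob_succ_self hinj hv, hemp]
        simp
      · have : ordv w ≠ t := fun h => hwv (hinj (h.trans hv.symm))
        exact Or.inl ⟨w, by omega, rfl⟩
    · have hiv : i ≠ ρ v := by
        rintro rfl
        rw [hemp] at hneP
        exact absurd hneP (by simp)
      exact Or.inr ⟨i, him, (blob_succ_other hinj hv hiv).symm, hneP⟩

lemma PPQ_succ_merge (hinj : Function.Injective ordv) (hrlt : ∀ v, ρ v < m)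
    {v : V} {t : ℕ} (hv : ordv v = t) (hne : (blobF ρ ordv t (ρ v)).Nonempty) :
    Merge (PPQ ρ ordv m t) (PPQ ρ ordv m (t+1)) := by
  have hXeq : blobF ρ ordv t (ρ v) ∪ {v} = blobF ρ ordv (t+1) (ρ v) := by
    rw [blob_succ_self hinj hv]
    ext w
    simp only [Finset.mem_union, Finset.mem_insert, Finset.mem_singleton]
    tauto
  refine ⟨blobF ρ ordv t (ρ v), mem_PPQ.mpr (Or.inr ⟨ρ v, hrlt v, rfl, hne⟩),
    {v}, mem_PPQ.mpr (Or.inl ⟨v, by omega, rfl⟩), ?_, ?_⟩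
  · intro h
    have : v ∈ blobF ρ ordv t (ρ v) := by rw [h]; simp
    rw [mem_blobF] at this
    omega
  · ext P
    simp only [Finset.mem_insert, Finset.mem_erase]
    rw [mem_PPQ, mem_PPQ]
    constructor
    · rintro (⟨w, hw, rfl⟩ | ⟨i, him, rfl, hneP⟩)
      · refine Or.inr ⟨?_, ?_, Or.inl ⟨w, by omega, rfl⟩⟩
        · intro h
          rw [Finset.singleton_inj] at h
          subst h
          omega
        · intro h
          have : w ∈ blobF ρ ordv t (ρ v) := by rw [← h]; exact Finset.mem_singleton_self w
          rw [mem_blobF] at this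
          omega
      · by_cases hiv : i = ρ v
        · subst hiv
          exact Or.inl hXeq.symm
        · refine Or.inr ⟨?_, ?_, Or.inr ⟨i, him, blob_succ_other hinj hv hiv, hneP⟩⟩
          · intro h
            have : v ∈ blobF ρ ordv (t+1) i := by rw [h]; exact Finset.mem_singleton_self v
            rw [mem_blobF] at this
            exact hiv this.1.symm
          · intro h
            obtain ⟨w, hw⟩ := hneP
            have h1 := (mem_blobF.mp hw).1
            have : w ∈ blobF ρ ordv t (ρ v) := by rw [← h]; exact hw
            exact hiv (h1 ▸ (mem_blobF.mp this).1 : i = ρ v)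
    · rintro (rfl | ⟨hB, hA, (⟨w, hw, rfl⟩ | ⟨i, him, rfl, hneP⟩)⟩)
      · refine Or.inr ⟨ρ v, hrlt v, hXeq, ⟨v, by simp⟩⟩
      · have : ordv w ≠ t := fun h => hB (by rw [hinj (h.trans hv.symm)])
        exact Or.inl ⟨w, by omega, rfl⟩
      · have hiv : i ≠ ρ v := fun h => hA (by rw [h])
        exact Or.inr ⟨i, him, (blob_succ_other hinj hv hiv).symm, hneP⟩

lemma PPQ_zero : PPQ ρ ordv m 0 = Finset.univ.image fun v => ({v} : Finset V) := by
  unfold PPQ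
  have h1 : (Finset.univ.filter fun v : V => 0 ≤ ordv v) = Finset.univ := by simp
  have h2 : (((Finset.range m).image fun i => blobF ρ ordv 0 i).filter
      fun s => s.Nonempty) = ∅ := by
    rw [Finset.filter_eq_empty_iff]
    intro s hs
    obtain ⟨i, _, rfl⟩ := Finset.mem_image.mp hs
    suffices h : blobF ρ ordv 0 i = ∅ by rw [h]; simp
    ext w
    simp [mem_blobF]
  rw [h1, h2, Finset.union_empty]

lemma PPQ_final (hm : 1 ≤ m) (hrsurj : ∀ i, i < m → ∃ v : V, ρ v = i)
    {T : ℕ} (hT : ∀ v : V, ordv v < T) : PPQ ρ ordv m T = Ps ρ m 0 := by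
  have hblob : ∀ i, blobF ρ ordv T i = rowF ρ i := by
    intro i
    ext w
    simp only [mem_blobF, mem_rowF]
    exact ⟨fun h => h.1, fun h => ⟨h, hT w⟩⟩
  ext P
  rw [mem_PPQ, mem_Ps]
  constructor
  · rintro (⟨v, hv, rfl⟩ | ⟨i, him, rfl, hneP⟩)
    · exact absurd hv (by have := hT v; omega)
    · by_cases hi0 : i = 0
      · subst hi0
        refine Or.inl ?_
        rw [hblob]
        ext w
        simp only [mem_rowF, Finset.mem_filter, Finset.mem_univ, true_and]
        omega
      · exact Or.inr ⟨i, by omega, him, hblob i⟩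
  · rintro (rfl | ⟨j, hj1, hj2, rfl⟩)
    · refine Or.inr ⟨0, hm, ?_, ?_⟩
      · rw [hblob]
        ext w
        simp only [mem_rowF, Finset.mem_filter, Finset.mem_univ, true_and]
        omega
      · obtain ⟨v, hv⟩ := hrsurj 0 hm
        exact ⟨v, by simp [hv]⟩
    · refine Or.inr ⟨j, hj2, (hblob j).symm, ?_⟩
      obtain ⟨v, hv⟩ := hrsurj j hj2
      exact ⟨v, mem_rowF.mpr hv⟩

lemma redAll_Ps (hrlt : ∀ v, ρ v < m)
    (hA : ∀ x y, G.Adj x y → ρ x ≤ ρ y + 1 ∧ ρ y ≤ ρ x + 1)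
    (s : ℕ) : ∀ P ∈ Ps ρ m s, redDeg G (Ps ρ m s) P ≤ 4 := by
  intro P hP
  have hdisj := Ps_disj (ρ := ρ) (m := m) s
  have huniq : ∀ (k : ℕ), ∀ Q ∈ Ps ρ m s, ∀ Q' ∈ Ps ρ m s,
      (∃ a ∈ Q, a ∈ rowF ρ k) → (∃ a ∈ Q', a ∈ rowF ρ k) → Q = Q' := by
    intro k Q hQ Q' hQ' ⟨a, ha, haf⟩ ⟨a', ha', ha'f⟩
    have e1 := part_char_Ps hQ ha
    have e2 := part_char_Ps hQ' ha'
    rw [mem_rowF] at haf ha'f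
    rw [haf] at e1
    rw [ha'f] at e2
    rw [e1, e2]
  have huniqU : ∀ Q ∈ Ps ρ m s, ∀ Q' ∈ Ps ρ m s,
      (∃ a ∈ Q, a ∈ (Finset.univ.filter fun v : V => ρ v ≤ s)) →
      (∃ a ∈ Q', a ∈ (Finset.univ.filter fun v : V => ρ v ≤ s)) → Q = Q' := by
    intro Q hQ Q' hQ' ⟨a, ha, haf⟩ ⟨a', ha', ha'f⟩
    rw [Finset.mem_filter] at haf ha'f
    have e1 := part_char_Ps hQ ha
    have e2 := part_char_Ps hQ' ha'
    rw [if_pos haf.2] at e1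
    rw [if_pos ha'f.2] at e2
    rw [e1, e2]
  rcases mem_Ps.mp hP with rfl | ⟨j, hj1, hj2, rfl⟩
  · apply redDeg_le_of_cover G (f := ![(↑(rowF ρ (s+1)) : Set V), ∅, ∅, ∅])
    · intro j Q hQ Q' hQ' h1 h2
      obtain ⟨a, ha, haf⟩ := h1
      obtain ⟨a', ha', ha'f⟩ := h2
      fin_cases j <;> simp only [Matrix.cons_val_zero, Matrix.cons_val_one, Matrix.head_cons,
        Matrix.cons_val_two, Matrix.tail_cons, Matrix.cons_val_three, Set.mem_empty_iff_false,
        Finset.mem_coe] at haf ha'f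
      · exact huniq (s+1) Q hQ Q' hQ' ⟨a, ha, haf⟩ ⟨a', ha', ha'f⟩
      · exact absurd haf (by simp)
      · exact absurd haf (by simp)
      · exact absurd haf (by simp)
    · intro Q hQ hne hnp
      obtain ⟨x, hx, y, hy, hadj⟩ := exists_adj_of_not_pure hnp
      rw [Finset.mem_filter] at hx
      have hyP : y ∉ (Finset.univ.filter fun v : V => ρ v ≤ s) :=
        Finset.disjoint_left.mp (hdisj Q hQ _ hP hne) hy
      rw [Finset.mem_filter] at hyP
      have hys : ¬ ρ y ≤ s := fun h => hyP ⟨Finset.mem_univ y, h⟩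
      have hrows := hA x y hadj
      refine ⟨0, y, hy, ?_⟩
      simp only [Matrix.cons_val_zero, Finset.mem_coe, mem_rowF]
      omega
  · apply redDeg_le_of_cover G (f := ![(↑(rowF ρ (j-1)) : Set V), ↑(rowF ρ (j+1)),
      ↑(Finset.univ.filter fun v : V => ρ v ≤ s), ∅])
    · intro jj Q hQ Q' hQ' h1 h2
      obtain ⟨a, ha, haf⟩ := h1
      obtain ⟨a', ha', ha'f⟩ := h2
      fin_cases jj <;> simp only [Matrix.cons_val_zero, Matrix.cons_val_one, Matrix.head_cons,
        Matrix.cons_val_two, Matrix.tail_cons, Matrix.cons_val_three, Set.mem_empty_iff_false,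
        Finset.mem_coe] at haf ha'f
      · exact huniq (j-1) Q hQ Q' hQ' ⟨a, ha, haf⟩ ⟨a', ha', ha'f⟩
      · exact huniq (j+1) Q hQ Q' hQ' ⟨a, ha, haf⟩ ⟨a', ha', ha'f⟩
      · exact huniqU Q hQ Q' hQ' ⟨a, ha, haf⟩ ⟨a', ha', ha'f⟩
      · exact absurd haf (by simp)
    · intro Q hQ hne hnp
      obtain ⟨x, hx, y, hy, hadj⟩ := exists_adj_of_not_pure hnp
      rw [mem_rowF] at hx
      have hyP : y ∉ rowF ρ j :=
        Finset.disjoint_left.mp (hdisj Q hQ _ hP hne) hy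
      rw [mem_rowF] at hyP
      have hrows := hA x y hadj
      by_cases hys : ρ y ≤ s
      · refine ⟨2, y, hy, ?_⟩
        simp only [Matrix.cons_val_two, Matrix.tail_cons, Matrix.head_cons, Finset.mem_coe,
          Finset.mem_filter]
        exact ⟨Finset.mem_univ y, hys⟩
      · rcases (by omega : ρ y + 1 = j ∨ ρ y = j + 1) with h | h
        · refine ⟨0, y, hy, ?_⟩
          simp only [Matrix.cons_val_zero, Finset.mem_coe, mem_rowF]
          omega
        · refine ⟨1, y, hy, ?_⟩
          simp only [Matrix.cons_val_one, Matrix.cons_val_zero, Matrix.head_cons, Finset.mem_coe, mem_rowF]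
          omega

lemma Ps_merge (hm : 1 ≤ m) (hrsurj : ∀ i, i < m → ∃ v : V, ρ v = i)
    {s : ℕ} (hs : s + 1 < m) : Merge (Ps ρ m s) (Ps ρ m (s+1)) := by
  have hU : (Finset.univ.filter fun v : V => ρ v ≤ s) ∪ rowF ρ (s+1) =
      (Finset.univ.filter fun v : V => ρ v ≤ s + 1) := by
    ext w
    simp only [Finset.mem_union, Finset.mem_filter, Finset.mem_univ, true_and, mem_rowF]
    omega
  obtain ⟨v0, hv0⟩ := hrsurj 0 hm
  obtain ⟨v1, hv1⟩ := hrsurj (s+1) hs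
  refine ⟨Finset.univ.filter fun v : V => ρ v ≤ s, mem_Ps.mpr (Or.inl rfl),
    rowF ρ (s+1), mem_Ps.mpr (Or.inr ⟨s+1, le_refl _, hs, rfl⟩), ?_, ?_⟩
  · intro h
    have : v0 ∈ rowF ρ (s+1) := by
      rw [← h]
      simp only [Finset.mem_filter, Finset.mem_univ, true_and]
      omega
    rw [mem_rowF] at this
    omega
  · ext P
    simp only [Finset.mem_insert, Finset.mem_erase]
    rw [mem_Ps, mem_Ps]
    constructor
    · rintro (rfl | ⟨j, hj1, hj2, rfl⟩)
      · exact Or.inl hU.symm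
      · refine Or.inr ⟨?_, ?_, Or.inr ⟨j, by omega, hj2, rfl⟩⟩
        · intro h
          obtain ⟨w, hw⟩ := hrsurj j hj2
          have hw1 : w ∈ rowF ρ j := mem_rowF.mpr hw
          have : w ∈ rowF ρ (s+1) := by rw [← h]; exact hw1
          rw [mem_rowF] at this
          omega
        · intro h
          obtain ⟨w, hw⟩ := hrsurj j hj2
          have hw1 : w ∈ rowF ρ j := mem_rowF.mpr hw
          have : w ∈ (Finset.univ.filter fun v : V => ρ v ≤ s) := by rw [← h]; exact hw1
          rw [Finset.mem_filter] at this
          omega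
    · rintro (rfl | ⟨hB, hA, (rfl | ⟨j, hj1, hj2, rfl⟩)⟩)
      · exact Or.inl hU
      · exact absurd rfl hA
      · have hj : j ≠ s + 1 := fun h => hB (by rw [h])
        exact Or.inr ⟨j, by omega, hj2, rfl⟩

lemma Ps_last (hm : 1 ≤ m) (hrlt : ∀ v, ρ v < m) :
    Ps ρ m (m-1) = ({Finset.univ} : Finset (Finset V)) := by
  unfold Ps
  have h1 : (Finset.univ.filter fun v : V => ρ v ≤ m - 1) = Finset.univ :=
    Finset.filter_true_of_mem (fun v _ => by have := hrlt v; omega)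
  have h2 : m - 1 + 1 = m := by omega
  rw [h1, h2, Finset.Ico_self, Finset.image_empty]
  rfl

theorem twwLE_of_sweep (hm : 1 ≤ m) (hinj : Function.Injective ordv)
    (hrlt : ∀ v, ρ v < m) (hrsurj : ∀ i, i < m → ∃ v : V, ρ v = i)
    (hA : ∀ x y, G.Adj x y → ρ x ≤ ρ y + 1 ∧ ρ y ≤ ρ x + 1)
    (hB : ∀ x y, G.Adj x y → ρ y + 1 = ρ x → ordv y < ordv x)
    (hC : ∀ t i (y y' : V),
      (t ≤ ordv y ∧ ρ y = i ∧ tk y = true ∧ ∃ x, ρ x = i ∧ ordv x < t ∧ G.Adj x y) →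
      (t ≤ ordv y' ∧ ρ y' = i ∧ tk y' = true ∧ ∃ x, ρ x = i ∧ ordv x < t ∧ G.Adj x y') →
      y = y')
    (hD : ∀ t i (y y' : V),
      (t ≤ ordv y ∧ ((ρ y = i ∧ tk y = false) ∨ ρ y = i + 1) ∧
        ∃ x, ρ x = i ∧ ordv x < t ∧ G.Adj x y) →
      (t ≤ ordv y' ∧ ((ρ y' = i ∧ tk y' = false) ∨ ρ y' = i + 1) ∧
        ∃ x, ρ x = i ∧ ordv x < t ∧ G.Adj x y') →
      y = y') :
    TwwLE G 4 := by
  have key1 : ∀ t, Relation.ReflTransGen (Step G 4) (PPQ ρ ordv m 0) (PPQ ρ ordv m t) := by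
    intro t
    induction t with
    | zero => exact Relation.ReflTransGen.refl
    | succ t ih =>
      by_cases hv : ∃ v : V, ordv v = t
      · obtain ⟨v, hv⟩ := hv
        by_cases hne : (blobF ρ ordv t (ρ v)).Nonempty
        · exact ih.tail ⟨PPQ_succ_merge hinj hrlt hv hne,
            redAll G tk hrlt hA hB hC hD (t+1)⟩
        · rw [PPQ_succ_newblob hinj hrlt hv (Finset.not_nonempty_iff_eq_empty.mp hne)]
          exact ih
      · rw [PPQ_succ_none (fun w h => hv ⟨w, h⟩)]
        exact ih
  have key2 : ∀ s, s < m → Relation.ReflTransGen (Step G 4) (Ps ρ m 0) (Ps ρ m s) := by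
    intro s
    induction s with
    | zero => intro _; exact Relation.ReflTransGen.refl
    | succ s ih =>
      intro hs
      exact (ih (by omega)).tail ⟨Ps_merge hm hrsurj hs, redAll_Ps G hrlt hA (s+1)⟩
  unfold TwwLE
  rw [← PPQ_zero (ρ := ρ) (ordv := ordv) (m := m), ← Ps_last (ρ := ρ) (m := m) hm hrlt]
  refine Relation.ReflTransGen.trans (key1 ((Finset.univ : Finset V).sup ordv + 1)) ?_
  rw [PPQ_final hm hrsurj (fun v => Nat.lt_succ_of_le (Finset.le_sup (Finset.mem_univ v)))]
  exact key2 (m-1) (by omega)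

end Sweep


section Concrete

variable {m n : ℕ} (ℓ : Fin m × Fin n → Fin m × Fin n → ℕ)

/-- Internal vertices of the horizontal edge entering `(i,j)` from the left. -/
def ehl (i : Fin m) (j : Fin n) : ℕ :=
  if h : 0 < j.val then ℓ (i, ⟨j.val - 1, by omega⟩) (i, j) else 0

/-- Bound on the subdivision lengths. -/
def MB : ℕ :=
  (Finset.univ : Finset ((Fin m × Fin n) × (Fin m × Fin n))).sup fun p => ℓ p.1 p.2

/-- Base for the positional encoding. -/
def LB : ℕ := 2 * MB ℓ + 1

lemma ℓ_le_MB (a b : Fin m × Fin n) : ℓ a b ≤ MB ℓ :=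
  Finset.le_sup (f := fun p : (Fin m × Fin n) × (Fin m × Fin n) => ℓ p.1 p.2)
    (Finset.mem_univ (a, b))

lemma ehl_le_MB (i : Fin m) (j : Fin n) : ehl ℓ i j ≤ MB ℓ := by
  unfold ehl
  split
  · apply ℓ_le_MB
  · omega

def rowOf : @SubdivVert (Fin m × Fin n) lexLT (gridGraph m n) ℓ → ℕ
  | Sum.inl p => p.1.val
  | Sum.inr ⟨e, _⟩ => e.1.1.1.val

def cellOf : @SubdivVert (Fin m × Fin n) lexLT (gridGraph m n) ℓ → ℕ
  | Sum.inl p => p.2.val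
  | Sum.inr ⟨e, _⟩ => if e.1.1.1 = e.1.2.1 then e.1.2.2.val else e.1.1.2.val

def posOf : @SubdivVert (Fin m × Fin n) lexLT (gridGraph m n) ℓ → ℕ
  | Sum.inl p => ehl ℓ p.1 p.2
  | Sum.inr ⟨e, q⟩ => if e.1.1.1 = e.1.2.1 then q.val
      else ehl ℓ e.1.1.1 e.1.1.2 + 1 + q.val

def tkOf : @SubdivVert (Fin m × Fin n) lexLT (gridGraph m n) ℓ → Bool
  | Sum.inl _ => true
  | Sum.inr ⟨e, _⟩ => decide (e.1.1.1 = e.1.2.1)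

def ordOf (v : @SubdivVert (Fin m × Fin n) lexLT (gridGraph m n) ℓ) : ℕ :=
  (cellOf ℓ v * m + rowOf ℓ v) * LB ℓ + posOf ℓ v

/-- orientation of an edge of the grid, oriented by `lexLT`. -/
lemma eOr (e : {p : (Fin m × Fin n) × (Fin m × Fin n) //
    @LT.lt _ lexLT p.1 p.2 ∧ (gridGraph m n).Adj p.1 p.2}) :
    (e.1.1.1 = e.1.2.1 ∧ e.1.1.2.val + 1 = e.1.2.2.val) ∨
    (e.1.1.2 = e.1.2.2 ∧ e.1.1.1.val + 1 = e.1.2.1.val) := by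
  obtain ⟨⟨p, q⟩, hlt, hadj⟩ := e
  dsimp only at hadj ⊢
  have hlt' : p.1 < q.1 ∨ (p.1 = q.1 ∧ p.2 < q.2) := hlt
  simp only [Fin.lt_def, Fin.ext_iff] at hlt'
  rcases hadj with ⟨h1, h2⟩ | ⟨h1, h2⟩
  · refine Or.inl ⟨h1, ?_⟩
    rw [Fin.ext_iff] at h1
    omega
  · refine Or.inr ⟨h1, ?_⟩
    rw [Fin.ext_iff] at h1
    omega

lemma rowOf_lt (v : @SubdivVert (Fin m × Fin n) lexLT (gridGraph m n) ℓ) : rowOf ℓ v < m := by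
  rcases v with p | ⟨e, q⟩
  · exact p.1.isLt
  · exact e.1.1.1.isLt

lemma posOf_lt (v : @SubdivVert (Fin m × Fin n) lexLT (gridGraph m n) ℓ) :
    posOf ℓ v < LB ℓ := by
  have hMB := fun (a b : Fin m × Fin n) => ℓ_le_MB ℓ a b
  rcases v with p | ⟨e, q⟩
  · have := ehl_le_MB ℓ p.1 p.2
    simp only [posOf, LB]
    omega
  · have hq := q.isLt
    have h1 := ℓ_le_MB ℓ e.1.1 e.1.2
    have h2 := ehl_le_MB ℓ e.1.1.1 e.1.1.2
    simp only [posOf, LB]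
    split <;> omega

lemma mixedLt_aux {A B p q Lc : ℕ} (hp : p < Lc) (hAB : A < B) :
    A * Lc + p < B * Lc + q :=
  calc A * Lc + p < A * Lc + Lc := by omega
    _ = (A + 1) * Lc := by ring
    _ ≤ B * Lc := Nat.mul_le_mul_right _ (by omega)
    _ ≤ B * Lc + q := Nat.le_add_right _ _

lemma mixedLt {A B p q Lc : ℕ} (hp : p < Lc) (hq : q < Lc) :
    A * Lc + p < B * Lc + q ↔ A < B ∨ (A = B ∧ p < q) := by
  constructor
  · intro h
    rcases lt_trichotomy A B with h' | h' | h'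
    · exact Or.inl h'
    · subst h'
      exact Or.inr ⟨rfl, by omega⟩
    · exact absurd (mixedLt_aux (q := p) hq h') (by omega)
  · rintro (h | ⟨rfl, h⟩)
    · exact mixedLt_aux (q := q) hp h
    · omega

lemma mixedEq {A B p q Lc : ℕ} (hp : p < Lc) (hq : q < Lc)
    (h : A * Lc + p = B * Lc + q) : A = B ∧ p = q := by
  rcases lt_trichotomy A B with h' | h' | h'
  · exact absurd (mixedLt_aux (q := q) hp h') (by omega)
  · subst h'
    exact ⟨rfl, by omega⟩
  · exact absurd (mixedLt_aux (q := p) hq h') (by omega)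

lemma mixedEq_iff {A B p q Lc : ℕ} (hp : p < Lc) (hq : q < Lc) :
    A * Lc + p = B * Lc + q ↔ A = B ∧ p = q := by
  constructor
  · exact mixedEq hp hq
  · rintro ⟨rfl, rfl⟩; rfl

lemma ord_lt_iff (v w : @SubdivVert (Fin m × Fin n) lexLT (gridGraph m n) ℓ) :
    ordOf ℓ v < ordOf ℓ w ↔ (cellOf ℓ v < cellOf ℓ w ∨ (cellOf ℓ v = cellOf ℓ w ∧
      (rowOf ℓ v < rowOf ℓ w ∨ (rowOf ℓ v = rowOf ℓ w ∧ posOf ℓ v < posOf ℓ w)))) := by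
  unfold ordOf
  rw [mixedLt (posOf_lt ℓ v) (posOf_lt ℓ w), mixedLt (rowOf_lt ℓ v) (rowOf_lt ℓ w),
    mixedEq_iff (rowOf_lt ℓ v) (rowOf_lt ℓ w)]
  tauto

lemma ord_eq_iff (v w : @SubdivVert (Fin m × Fin n) lexLT (gridGraph m n) ℓ) :
    ordOf ℓ v = ordOf ℓ w ↔ (cellOf ℓ v = cellOf ℓ w ∧ rowOf ℓ v = rowOf ℓ w ∧
      posOf ℓ v = posOf ℓ w) := by
  unfold ordOf
  rw [mixedEq_iff (posOf_lt ℓ v) (posOf_lt ℓ w), mixedEq_iff (rowOf_lt ℓ v) (rowOf_lt ℓ w)]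
  tauto

lemma ehl_eq (i : Fin m) (b d : Fin n) (h : b.val + 1 = d.val) :
    ehl ℓ i d = ℓ (i, b) (i, d) := by
  unfold ehl
  rw [dif_pos (show 0 < d.val by omega)]
  have hb : (⟨d.val - 1, by omega⟩ : Fin n) = b := Fin.ext (by simp; omega)
  rw [hb]

lemma ehl_horiz (e : {p : (Fin m × Fin n) × (Fin m × Fin n) //
    @LT.lt _ lexLT p.1 p.2 ∧ (gridGraph m n).Adj p.1 p.2})
    (h1 : e.1.1.1 = e.1.2.1) (h2 : e.1.1.2.val + 1 = e.1.2.2.val) :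
    ehl ℓ e.1.1.1 e.1.2.2 = ℓ e.1.1 e.1.2 := by
  rw [ehl_eq ℓ e.1.1.1 e.1.1.2 e.1.2.2 h2]
  conv_rhs => rw [← Prod.mk.eta (p := e.1.1), ← Prod.mk.eta (p := e.1.2)]
  rw [h1]

lemma vert_snd (e : {p : (Fin m × Fin n) × (Fin m × Fin n) //
    @LT.lt _ lexLT p.1 p.2 ∧ (gridGraph m n).Adj p.1 p.2})
    (h1 : e.1.1.2 = e.1.2.2) (h2 : e.1.1.1.val + 1 = e.1.2.1.val) :
    e.1.2 = (⟨e.1.1.1.val + 1, h2 ▸ e.1.2.1.isLt⟩, e.1.1.2) :=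
  Prod.ext (Fin.ext (by simp; omega)) h1.symm

lemma vert_eq (e e' : {p : (Fin m × Fin n) × (Fin m × Fin n) //
    @LT.lt _ lexLT p.1 p.2 ∧ (gridGraph m n).Adj p.1 p.2})
    (h1 : e.1.1.2 = e.1.2.2) (h2 : e.1.1.1.val + 1 = e.1.2.1.val)
    (h1' : e'.1.1.2 = e'.1.2.2) (h2' : e'.1.1.1.val + 1 = e'.1.2.1.val)
    (h : e.1.1 = e'.1.1) : e = e' := by
  apply Subtype.ext
  refine Prod.ext h ?_
  rw [vert_snd e h1 h2, vert_snd e' h1' h2']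
  refine Prod.ext (Fin.ext ?_) ?_
  · simp [h]
  · simp [h]

lemma horiz_eq (e e' : {p : (Fin m × Fin n) × (Fin m × Fin n) //
    @LT.lt _ lexLT p.1 p.2 ∧ (gridGraph m n).Adj p.1 p.2})
    (h1 : e.1.1.1 = e.1.2.1) (h2 : e.1.1.2.val + 1 = e.1.2.2.val)
    (h1' : e'.1.1.1 = e'.1.2.1) (h2' : e'.1.1.2.val + 1 = e'.1.2.2.val)
    (hr : e.1.1.1 = e'.1.1.1) (hc : e.1.2.2 = e'.1.2.2) : e = e' := by
  apply Subtype.ext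
  rw [Fin.ext_iff] at hc
  refine Prod.ext (Prod.ext hr (Fin.ext (by omega))) (Prod.ext (Fin.ext ?_) (Fin.ext hc))
  rw [Fin.ext_iff] at h1 h1' hr
  omega

lemma eq_of_crp (v w : @SubdivVert (Fin m × Fin n) lexLT (gridGraph m n) ℓ)
    (hr : rowOf ℓ v = rowOf ℓ w) (hc : cellOf ℓ v = cellOf ℓ w)
    (hp : posOf ℓ v = posOf ℓ w) : v = w := by
  rcases v with p | ⟨e, q⟩ <;> rcases w with p' | ⟨e', q'⟩
  · exact congrArg Sum.inl (Prod.ext (Fin.ext hr) (Fin.ext hc))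
  · exfalso
    rcases eOr e' with ⟨h1, h2⟩ | ⟨h1, h2⟩
    · simp only [rowOf, cellOf, posOf, if_pos h1] at hr hc hp
      have hfr : p.1 = e'.1.1.1 := Fin.ext hr
      have hfc : p.2 = e'.1.2.2 := Fin.ext hc
      have := q'.isLt
      rw [hfr, hfc] at hp
      rw [ehl_horiz ℓ e' h1 h2] at hp
      omega
    · have h1x : e'.1.1.1 ≠ e'.1.2.1 := by
        intro hh; rw [Fin.ext_iff] at hh; omega
      simp only [rowOf, cellOf, posOf, if_neg h1x] at hr hc hp
      have hfr : p.1 = e'.1.1.1 := Fin.ext hr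
      have hfc : p.2 = e'.1.1.2 := Fin.ext hc
      rw [hfr, hfc] at hp
      omega
  · exfalso
    rcases eOr e with ⟨h1, h2⟩ | ⟨h1, h2⟩
    · simp only [rowOf, cellOf, posOf, if_pos h1] at hr hc hp
      have hfr : p'.1 = e.1.1.1 := Fin.ext hr.symm
      have hfc : p'.2 = e.1.2.2 := Fin.ext hc.symm
      have := q.isLt
      rw [hfr, hfc] at hp
      rw [ehl_horiz ℓ e h1 h2] at hp
      omega
    · have h1x : e.1.1.1 ≠ e.1.2.1 := by
        intro hh; rw [Fin.ext_iff] at hh; omega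
      simp only [rowOf, cellOf, posOf, if_neg h1x] at hr hc hp
      have hfr : p'.1 = e.1.1.1 := Fin.ext hr.symm
      have hfc : p'.2 = e.1.1.2 := Fin.ext hc.symm
      rw [hfr, hfc] at hp
      omega
  · rcases eOr e with ⟨h1, h2⟩ | ⟨h1, h2⟩ <;> rcases eOr e' with ⟨h1', h2'⟩ | ⟨h1', h2'⟩
    · -- both horizontal
      simp only [rowOf, cellOf, posOf, if_pos h1, if_pos h1'] at hr hc hp
      obtain rfl : e = e' := horiz_eq e e' h1 h2 h1' h2' (Fin.ext hr) (Fin.ext hc)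
      exact congrArg Sum.inr (congrArg (Sigma.mk e) (Fin.ext hp))
    · exfalso
      have h1x : e'.1.1.1 ≠ e'.1.2.1 := by intro hh; rw [Fin.ext_iff] at hh; omega
      simp only [rowOf, cellOf, posOf, if_pos h1, if_neg h1x] at hr hc hp
      have := q.isLt
      have hee : ehl ℓ e.1.1.1 e.1.2.2 = ℓ e.1.1 e.1.2 := ehl_horiz ℓ e h1 h2
      have hcongr : ehl ℓ e.1.1.1 e.1.2.2 = ehl ℓ e'.1.1.1 e'.1.1.2 := by
        rw [Fin.ext hr, Fin.ext hc]
      omega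
    · exfalso
      have h1x : e.1.1.1 ≠ e.1.2.1 := by intro hh; rw [Fin.ext_iff] at hh; omega
      simp only [rowOf, cellOf, posOf, if_neg h1x, if_pos h1'] at hr hc hp
      have := q'.isLt
      have hee : ehl ℓ e'.1.1.1 e'.1.2.2 = ℓ e'.1.1 e'.1.2 := ehl_horiz ℓ e' h1' h2'
      have hcongr : ehl ℓ e'.1.1.1 e'.1.2.2 = ehl ℓ e.1.1.1 e.1.1.2 := by
        rw [Fin.ext hr.symm, Fin.ext hc.symm]
      omega
    · -- both vertical
      have h1x : e.1.1.1 ≠ e.1.2.1 := by intro hh; rw [Fin.ext_iff] at hh; omega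
      have h1x' : e'.1.1.1 ≠ e'.1.2.1 := by intro hh; rw [Fin.ext_iff] at hh; omega
      simp only [rowOf, cellOf, posOf, if_neg h1x, if_neg h1x'] at hr hc hp
      obtain rfl : e = e' := vert_eq e e' h1 h2 h1' h2' (Prod.ext (Fin.ext hr) (Fin.ext hc))
      exact congrArg Sum.inr (congrArg (Sigma.mk e) (Fin.ext (by omega)))

lemma ordOf_inj : Function.Injective (ordOf ℓ) := by
  intro v w h
  rw [ord_eq_iff] at h
  exact eq_of_crp ℓ v w h.2.1 h.1 h.2.2

lemma trackH_pos (z : @SubdivVert (Fin m × Fin n) lexLT (gridGraph m n) ℓ)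
    (htk : tkOf ℓ z = true) (i : Fin m) (j : Fin n)
    (hr : rowOf ℓ z = i.val) (hc : cellOf ℓ z = j.val) : posOf ℓ z ≤ ehl ℓ i j := by
  rcases z with p | ⟨e, q⟩
  · simp only [rowOf, cellOf, posOf] at *
    rw [Fin.ext hr, Fin.ext hc]
  · have h1 : e.1.1.1 = e.1.2.1 := by simpa [tkOf] using htk
    rcases eOr e with ⟨-, h2⟩ | ⟨h1', h2⟩
    · simp only [rowOf, cellOf, posOf, if_pos h1] at hr hc ⊢
      have hq := q.isLt
      have hee := ehl_horiz ℓ e h1 h2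
      have hcongr : ehl ℓ e.1.1.1 e.1.2.2 = ehl ℓ i j := by rw [Fin.ext hr, Fin.ext hc]
      omega
    · exfalso
      rw [Fin.ext_iff] at h1
      omega

lemma cell_max (i : Fin m) (j : Fin n) {i' : Fin m} (hsucc : i.val + 1 = i'.val)
    (z : @SubdivVert (Fin m × Fin n) lexLT (gridGraph m n) ℓ)
    (hr : rowOf ℓ z = i.val) (hc : cellOf ℓ z = j.val) :
    posOf ℓ z ≤ ehl ℓ i j + ℓ (i, j) (i', j) := by
  rcases z with p | ⟨e, q⟩
  · simp only [rowOf, cellOf, posOf] at *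
    rw [Fin.ext hr, Fin.ext hc]
    omega
  · rcases eOr e with ⟨h1, h2⟩ | ⟨h1, h2⟩
    · simp only [rowOf, cellOf, posOf, if_pos h1] at hr hc ⊢
      have hq := q.isLt
      have hee := ehl_horiz ℓ e h1 h2
      have hcongr : ehl ℓ e.1.1.1 e.1.2.2 = ehl ℓ i j := by rw [Fin.ext hr, Fin.ext hc]
      omega
    · have h1x : e.1.1.1 ≠ e.1.2.1 := fun hh => by rw [Fin.ext_iff] at hh; omega
      simp only [rowOf, cellOf, posOf, if_neg h1x] at hr hc ⊢
      have hq := q.isLt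
      have hfr : e.1.1.1 = i := Fin.ext hr
      have hfc : e.1.1.2 = j := Fin.ext hc
      have he2 : e.1.2 = (i', j) := by
        rw [vert_snd e h1 h2]
        refine Prod.ext (Fin.ext ?_) hfc
        simp
        omega
      have hll : ℓ e.1.1 e.1.2 = ℓ (i, j) (i', j) := by
        rw [he2, ← hfr, ← hfc, Prod.mk.eta]
      rw [hfr, hfc]
      omega

lemma adj_row {x y : @SubdivVert (Fin m × Fin n) lexLT (gridGraph m n) ℓ}
    (h : (@Subdiv (Fin m × Fin n) lexLT (gridGraph m n) ℓ).Adj x y) :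
    rowOf ℓ x ≤ rowOf ℓ y + 1 ∧ rowOf ℓ y ≤ rowOf ℓ x + 1 := by
  rcases x with a | ⟨e, q⟩ <;> rcases y with b | ⟨e', q'⟩
  · obtain ⟨hadj, -⟩ := h
    simp only [rowOf]
    rcases hadj with ⟨h1, -⟩ | ⟨-, h1⟩
    · rw [Fin.ext_iff] at h1; omega
    · omega
  · simp only [rowOf]
    rcases h with ⟨rfl, -⟩ | ⟨rfl, -⟩ <;> dsimp only at *
    · omega
    · rcases eOr e' with ⟨h1, -⟩ | ⟨-, h2⟩
      · rw [Fin.ext_iff] at h1; omega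
      · omega
  · simp only [rowOf]
    rcases h with ⟨rfl, -⟩ | ⟨rfl, -⟩ <;> dsimp only at *
    · omega
    · rcases eOr e with ⟨h1, -⟩ | ⟨-, h2⟩
      · rw [Fin.ext_iff] at h1; omega
      · omega
  · obtain ⟨he, -⟩ := h
    dsimp only at he
    subst he
    simp only [rowOf]
    omega

lemma adj_up {x y : @SubdivVert (Fin m × Fin n) lexLT (gridGraph m n) ℓ}
    (h : (@Subdiv (Fin m × Fin n) lexLT (gridGraph m n) ℓ).Adj x y)
    (hrow : rowOf ℓ y + 1 = rowOf ℓ x) : ordOf ℓ y < ordOf ℓ x := by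
  rw [ord_lt_iff]
  rcases x with a | ⟨e, q⟩ <;> rcases y with b | ⟨e', q'⟩
  · obtain ⟨hadj, -⟩ := h
    simp only [rowOf, cellOf, posOf] at *
    rcases hadj with ⟨h1, -⟩ | ⟨h1, -⟩
    · rw [Fin.ext_iff] at h1; omega
    · rw [Fin.ext_iff] at h1
      exact Or.inr ⟨h1.symm, Or.inl (by omega)⟩
  · rcases h with ⟨rfl, -⟩ | ⟨rfl, hq'⟩ <;> dsimp only at *
    · simp only [rowOf] at hrow; omega
    · rcases eOr e' with ⟨h1, -⟩ | ⟨h1, h2⟩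
      · exfalso
        simp only [rowOf] at hrow
        rw [Fin.ext_iff] at h1
        omega
      · have h1x : e'.1.1.1 ≠ e'.1.2.1 := fun hh => by rw [Fin.ext_iff] at hh; omega
        simp only [rowOf, cellOf, posOf, if_neg h1x] at hrow ⊢
        rw [Fin.ext_iff] at h1
        exact Or.inr ⟨by omega, Or.inl (by omega)⟩
  · rcases h with ⟨rfl, -⟩ | ⟨rfl, hq⟩ <;> dsimp only at *
    · simp only [rowOf] at hrow; omega
    · rcases eOr e with ⟨h1, -⟩ | ⟨h1, h2⟩
      · exfalso
        simp only [rowOf] at hrow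
        rw [Fin.ext_iff] at h1
        omega
      · exfalso
        simp only [rowOf] at hrow
        omega
  · obtain ⟨he, -⟩ := h
    dsimp only at he
    subst he
    simp only [rowOf] at hrow
    omega

lemma tk_inr_true {e : {p : (Fin m × Fin n) × (Fin m × Fin n) //
    @LT.lt _ lexLT p.1 p.2 ∧ (gridGraph m n).Adj p.1 p.2}} {q : Fin (ℓ e.1.1 e.1.2)}
    (h : tkOf ℓ (Sum.inr ⟨e, q⟩) = true) : e.1.1.1 = e.1.2.1 := by
  simpa [tkOf] using h

lemma eOr_horiz (e : {p : (Fin m × Fin n) × (Fin m × Fin n) //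
    @LT.lt _ lexLT p.1 p.2 ∧ (gridGraph m n).Adj p.1 p.2})
    (h : e.1.1.1 = e.1.2.1) : e.1.1.2.val + 1 = e.1.2.2.val := by
  rcases eOr e with ⟨-, h2⟩ | ⟨-, h2⟩
  · exact h2
  · rw [Fin.ext_iff] at h
    omega

lemma eOr_vert (e : {p : (Fin m × Fin n) × (Fin m × Fin n) //
    @LT.lt _ lexLT p.1 p.2 ∧ (gridGraph m n).Adj p.1 p.2})
    (h : e.1.1.1 ≠ e.1.2.1) : e.1.1.2 = e.1.2.2 ∧ e.1.1.1.val + 1 = e.1.2.1.val := by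
  rcases eOr e with ⟨h1, -⟩ | ⟨h1, h2⟩
  · exact absurd h1 h
  · exact ⟨h1, h2⟩

lemma L1 {x y : @SubdivVert (Fin m × Fin n) lexLT (gridGraph m n) ℓ}
    (h : (@Subdiv (Fin m × Fin n) lexLT (gridGraph m n) ℓ).Adj x y)
    (hrow : rowOf ℓ x = rowOf ℓ y) (htk : tkOf ℓ y = true)
    (hxy : ordOf ℓ x < ordOf ℓ y) (z : @SubdivVert (Fin m × Fin n) lexLT (gridGraph m n) ℓ)
    (hzr : rowOf ℓ z = rowOf ℓ y) (hztk : tkOf ℓ z = true)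
    (hxz : ordOf ℓ x < ordOf ℓ z) : ordOf ℓ y ≤ ordOf ℓ z := by
  by_contra hc
  push_neg at hc
  rw [ord_lt_iff] at hxy hxz hc
  obtain ⟨rz, hrz⟩ : ∃ r, rowOf ℓ z = r := ⟨_, rfl⟩
  obtain ⟨cz, hcz⟩ : ∃ c, cellOf ℓ z = c := ⟨_, rfl⟩
  obtain ⟨pz, hpz⟩ : ∃ p, posOf ℓ z = p := ⟨_, rfl⟩
  rw [hrz] at hzr
  simp only [hrz, hcz, hpz] at hxz hc
  rcases x with a | ⟨e, q⟩ <;> rcases y with b | ⟨e', q'⟩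
  · -- inl inl
    obtain ⟨hadj, hor⟩ := h
    rcases hadj with ⟨h1, h2⟩ | ⟨h1, h2⟩
    swap
    · simp only [rowOf] at hrow
      rw [Fin.ext_iff] at h1
      omega
    simp only [rowOf, cellOf, posOf] at hrow hzr hxy hxz hc
    rw [Fin.ext_iff] at h1
    rcases hor with ⟨hlt0, hl0⟩ | ⟨hlt0, hl0⟩
    · have hlt0' : a.1 < b.1 ∨ (a.1 = b.1 ∧ a.2 < b.2) := hlt0
      simp only [Fin.lt_def, Fin.ext_iff] at hlt0'
      have hv : a.2.val + 1 = b.2.val := by omega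
      have h0 : ehl ℓ b.1 b.2 = 0 := by
        rw [ehl_eq ℓ b.1 a.2 b.2 hv]
        have ha' : ((b.1, a.2) : Fin m × Fin n) = a := Prod.ext (Fin.ext h1).symm rfl
        rw [ha', Prod.mk.eta]
        exact hl0
      have hzb := trackH_pos ℓ z hztk a.1 a.2 (by rw [hrz]; omega) (by rw [hcz]; omega)
      rw [hpz] at hzb
      omega
    · have hlt0' : b.1 < a.1 ∨ (b.1 = a.1 ∧ b.2 < a.2) := hlt0
      simp only [Fin.lt_def, Fin.ext_iff] at hlt0'
      omega
  · -- inl inr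
    rcases h with ⟨rfl, hq0⟩ | ⟨rfl, hqt⟩ <;> (try dsimp only at *)
    · by_cases h1 : e'.1.1.1 = e'.1.2.1
      · have h2 := eOr_horiz e' h1
        simp only [rowOf, cellOf, posOf, if_pos h1] at hrow hzr hxy hxz hc
        have hzb := trackH_pos ℓ z hztk e'.1.1.1 e'.1.1.2 (by rw [hrz]; omega)
          (by rw [hcz]; omega)
        rw [hpz] at hzb
        omega
      · have := tk_inr_true ℓ htk
        exact absurd this h1
    · by_cases h1 : e'.1.1.1 = e'.1.2.1
      · have h2 := eOr_horiz e' h1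
        have hee : ehl ℓ e'.1.2.1 e'.1.2.2 = ℓ e'.1.1 e'.1.2 := by
          rw [← h1, ehl_horiz ℓ e' h1 h2]
        simp only [rowOf, cellOf, posOf, if_pos h1] at hrow hzr hxy hxz hc
        omega
      · obtain ⟨-, h2⟩ := eOr_vert e' h1
        simp only [rowOf] at hrow
        omega
  · -- inr inl
    rcases h with ⟨rfl, hq0⟩ | ⟨rfl, hqt⟩ <;> (try dsimp only at *)
    · by_cases h1 : e.1.1.1 = e.1.2.1
      · have h2 := eOr_horiz e h1
        simp only [rowOf, cellOf, posOf, if_pos h1] at hrow hzr hxy hxz hc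
        omega
      · obtain ⟨h1', h2⟩ := eOr_vert e h1
        simp only [rowOf, cellOf, posOf, if_neg h1] at hrow hzr hxy hxz hc
        omega
    · by_cases h1 : e.1.1.1 = e.1.2.1
      · have h2 := eOr_horiz e h1
        have hee : ehl ℓ e.1.2.1 e.1.2.2 = ℓ e.1.1 e.1.2 := by
          rw [← h1, ehl_horiz ℓ e h1 h2]
        have hql := q.isLt
        simp only [rowOf, cellOf, posOf, if_pos h1] at hrow hzr hxy hxz hc
        omega
      · obtain ⟨h1', h2⟩ := eOr_vert e h1
        simp only [rowOf] at hrow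
        omega
  · -- inr inr
    obtain ⟨hee', hqq⟩ := h
    try dsimp only at hee' hqq
    subst hee'
    have h1 := tk_inr_true ℓ htk
    simp only [rowOf, cellOf, posOf, if_pos h1] at hrow hzr hxy hxz hc
    omega

lemma L2a {x y : @SubdivVert (Fin m × Fin n) lexLT (gridGraph m n) ℓ}
    (h : (@Subdiv (Fin m × Fin n) lexLT (gridGraph m n) ℓ).Adj x y)
    (hrow : rowOf ℓ x = rowOf ℓ y) (htk : tkOf ℓ y = false)
    (hxy : ordOf ℓ x < ordOf ℓ y) : ordOf ℓ y = ordOf ℓ x + 1 := by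
  rcases x with a | ⟨e, q⟩ <;> rcases y with b | ⟨e', q'⟩
  · simp [tkOf] at htk
  · have h1 : e'.1.1.1 ≠ e'.1.2.1 := by
      intro hh
      simp [tkOf, hh] at htk
    obtain ⟨h1', h2⟩ := eOr_vert e' h1
    rcases h with ⟨rfl, hq0⟩ | ⟨rfl, hqt⟩ <;> (try dsimp only at *)
    · unfold ordOf
      simp only [rowOf, cellOf, posOf, if_neg h1]
      omega
    · exfalso
      simp only [rowOf] at hrow
      omega
  · simp [tkOf] at htk
  · obtain ⟨hee', hqq⟩ := h
    try dsimp only at hee' hqq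
    subst hee'
    have h1 : e.1.1.1 ≠ e.1.2.1 := by
      intro hh
      simp [tkOf, hh] at htk
    rcases hqq with hq | hq
    · unfold ordOf
      simp only [rowOf, cellOf, posOf, if_neg h1]
      omega
    · exfalso
      replace hxy := (ord_lt_iff ℓ _ _).mp hxy
      simp only [rowOf, cellOf, posOf, if_neg h1] at hxy
      omega

lemma L2b {x y : @SubdivVert (Fin m × Fin n) lexLT (gridGraph m n) ℓ}
    (h : (@Subdiv (Fin m × Fin n) lexLT (gridGraph m n) ℓ).Adj x y)
    (hrow : rowOf ℓ y = rowOf ℓ x + 1) :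
    (∃ b : Fin m × Fin n, y = Sum.inl b) ∧ cellOf ℓ y = cellOf ℓ x ∧
      ∀ z : @SubdivVert (Fin m × Fin n) lexLT (gridGraph m n) ℓ,
        rowOf ℓ z = rowOf ℓ x → cellOf ℓ z = cellOf ℓ x → posOf ℓ z ≤ posOf ℓ x := by
  rcases x with a | ⟨e, q⟩ <;> rcases y with b | ⟨e', q'⟩
  · obtain ⟨hadj, hor⟩ := h
    rcases hadj with ⟨h1, h2⟩ | ⟨h1, h2⟩
    · exfalso
      simp only [rowOf] at hrow
      rw [Fin.ext_iff] at h1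
      omega
    · simp only [rowOf] at hrow
      have hsucc : a.1.val + 1 = b.1.val := by omega
      have hl0 : ℓ a b = 0 := by
        rcases hor with ⟨-, hl0⟩ | ⟨hlt0, -⟩
        · exact hl0
        · exfalso
          have hlt0' : b.1 < a.1 ∨ (b.1 = a.1 ∧ b.2 < a.2) := hlt0
          simp only [Fin.lt_def, Fin.ext_iff] at hlt0'
          rw [Fin.ext_iff] at h1
          omega
      refine ⟨⟨b, rfl⟩, ?_, ?_⟩
      · simp only [cellOf]
        rw [Fin.ext_iff] at h1
        omega
      · intro z hzr hzc
        have hra : rowOf ℓ (Sum.inl a : @SubdivVert (Fin m × Fin n) lexLT (gridGraph m n) ℓ)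
            = a.1.val := rfl
        have hca : cellOf ℓ (Sum.inl a : @SubdivVert (Fin m × Fin n) lexLT (gridGraph m n) ℓ)
            = a.2.val := rfl
        have hpa : posOf ℓ (Sum.inl a : @SubdivVert (Fin m × Fin n) lexLT (gridGraph m n) ℓ)
            = ehl ℓ a.1 a.2 := rfl
        rw [hra] at hzr
        rw [hca] at hzc
        rw [hpa]
        have hcm := cell_max ℓ a.1 a.2 (i' := b.1) hsucc z hzr hzc
        have hb' : ((b.1, a.2) : Fin m × Fin n) = b := Prod.ext rfl h1
        rw [Prod.mk.eta, hb', hl0] at hcm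
        omega
  · exfalso
    rcases h with ⟨rfl, -⟩ | ⟨rfl, -⟩ <;> (try dsimp only at *)
    · simp only [rowOf] at hrow
      omega
    · by_cases h1 : e'.1.1.1 = e'.1.2.1
      · simp only [rowOf] at hrow
        rw [Fin.ext_iff] at h1
        omega
      · obtain ⟨-, h2⟩ := eOr_vert e' h1
        simp only [rowOf] at hrow
        omega
  · rcases h with ⟨rfl, hq0⟩ | ⟨rfl, hqt⟩ <;> (try dsimp only at *)
    · exfalso
      simp only [rowOf] at hrow
      omega
    · by_cases h1 : e.1.1.1 = e.1.2.1
      · exfalso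
        simp only [rowOf] at hrow
        rw [Fin.ext_iff] at h1
        omega
      · obtain ⟨h1', h2⟩ := eOr_vert e h1
        refine ⟨⟨e.1.2, rfl⟩, ?_, ?_⟩
        · simp only [cellOf, posOf, if_neg h1]
          rw [Fin.ext_iff] at h1'
          omega
        · intro z hzr hzc
          have hra : rowOf ℓ (Sum.inr ⟨e, q⟩ : @SubdivVert (Fin m × Fin n) lexLT (gridGraph m n) ℓ)
              = e.1.1.1.val := rfl
          have hca : cellOf ℓ (Sum.inr ⟨e, q⟩ : @SubdivVert (Fin m × Fin n) lexLT (gridGraph m n) ℓ)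
              = e.1.1.2.val := by simp only [cellOf, if_neg h1]
          have hpa : posOf ℓ (Sum.inr ⟨e, q⟩ : @SubdivVert (Fin m × Fin n) lexLT (gridGraph m n) ℓ)
              = ehl ℓ e.1.1.1 e.1.1.2 + 1 + q.val := by simp only [posOf, if_neg h1]
          rw [hra] at hzr
          rw [hca] at hzc
          rw [hpa]
          have hcm := cell_max ℓ e.1.1.1 e.1.1.2 (i' := e.1.2.1) h2 z hzr hzc
          have hb' : ((e.1.2.1, e.1.1.2) : Fin m × Fin n) = e.1.2 := Prod.ext rfl h1'
          rw [Prod.mk.eta, hb'] at hcm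
          have hql := q.isLt
          omega
  · exfalso
    obtain ⟨hee', -⟩ := h
    try dsimp only at hee'
    subst hee'
    simp only [rowOf] at hrow
    omega

lemma hC_subdiv : ∀ (t i : ℕ) (y y' : @SubdivVert (Fin m × Fin n) lexLT (gridGraph m n) ℓ),
    (t ≤ ordOf ℓ y ∧ rowOf ℓ y = i ∧ tkOf ℓ y = true ∧
      ∃ x, rowOf ℓ x = i ∧ ordOf ℓ x < t ∧
        (@Subdiv (Fin m × Fin n) lexLT (gridGraph m n) ℓ).Adj x y) →
    (t ≤ ordOf ℓ y' ∧ rowOf ℓ y' = i ∧ tkOf ℓ y' = true ∧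
      ∃ x, rowOf ℓ x = i ∧ ordOf ℓ x < t ∧
        (@Subdiv (Fin m × Fin n) lexLT (gridGraph m n) ℓ).Adj x y') → y = y' := by
  rintro t i y y' ⟨hty, hry, htk, x, hrx, hox, hadj⟩ ⟨hty', hry', htk', x', hrx', hox', hadj'⟩
  have l1 := L1 ℓ hadj (by omega) htk (by omega) y' (by omega) htk' (by omega)
  have l2 := L1 ℓ hadj' (by omega) htk' (by omega) y (by omega) htk (by omega)
  exact ordOf_inj ℓ (by omega)

lemma hD_mixed {t i : ℕ} {y x y' x' : @SubdivVert (Fin m × Fin n) lexLT (gridGraph m n) ℓ}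
    (hty : t ≤ ordOf ℓ y) (hry : rowOf ℓ y = i) (htk : tkOf ℓ y = false)
    (hrx : rowOf ℓ x = i) (hox : ordOf ℓ x < t)
    (hadj : (@Subdiv (Fin m × Fin n) lexLT (gridGraph m n) ℓ).Adj x y)
    (hty' : t ≤ ordOf ℓ y') (hry' : rowOf ℓ y' = i + 1)
    (hrx' : rowOf ℓ x' = i) (hox' : ordOf ℓ x' < t)
    (hadj' : (@Subdiv (Fin m × Fin n) lexLT (gridGraph m n) ℓ).Adj x' y') : False := by
  have e1 : ordOf ℓ y = t := by
    have := L2a ℓ hadj (by omega) htk (by omega)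
    omega
  obtain ⟨⟨b', rfl⟩, hcell', hmax'⟩ := L2b ℓ hadj' (by omega)
  rcases lt_trichotomy (cellOf ℓ y) (cellOf ℓ x') with hlt | heq | hgt
  · have : ordOf ℓ y < ordOf ℓ x' := (ord_lt_iff ℓ y x').mpr (Or.inl hlt)
    omega
  · have hmp := hmax' y (by omega) (by omega)
    have hx'y : ordOf ℓ x' < ordOf ℓ y := by omega
    rw [ord_lt_iff] at hx'y
    omega
  · have hne : ordOf ℓ y ≠ ordOf ℓ (Sum.inl b') := by
      intro hcon
      have heq2 := ordOf_inj ℓ hcon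
      rw [heq2] at hry
      omega
    have hlt2 : ordOf ℓ y < ordOf ℓ (Sum.inl b') := by omega
    replace hlt2 := (ord_lt_iff ℓ _ _).mp hlt2
    omega

lemma hD_subdiv : ∀ (t i : ℕ) (y y' : @SubdivVert (Fin m × Fin n) lexLT (gridGraph m n) ℓ),
    (t ≤ ordOf ℓ y ∧ ((rowOf ℓ y = i ∧ tkOf ℓ y = false) ∨ rowOf ℓ y = i + 1) ∧
      ∃ x, rowOf ℓ x = i ∧ ordOf ℓ x < t ∧
        (@Subdiv (Fin m × Fin n) lexLT (gridGraph m n) ℓ).Adj x y) →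
    (t ≤ ordOf ℓ y' ∧ ((rowOf ℓ y' = i ∧ tkOf ℓ y' = false) ∨ rowOf ℓ y' = i + 1) ∧
      ∃ x, rowOf ℓ x = i ∧ ordOf ℓ x < t ∧
        (@Subdiv (Fin m × Fin n) lexLT (gridGraph m n) ℓ).Adj x y') → y = y' := by
  rintro t i y y' ⟨hty, hk, x, hrx, hox, hadj⟩ ⟨hty', hk', x', hrx', hox', hadj'⟩
  rcases hk with ⟨hry, htk⟩ | hry <;> rcases hk' with ⟨hry', htk'⟩ | hry'
  · have e1 : ordOf ℓ y = t := by
      have := L2a ℓ hadj (by omega) htk (by omega)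
      omega
    have e2 : ordOf ℓ y' = t := by
      have := L2a ℓ hadj' (by omega) htk' (by omega)
      omega
    exact ordOf_inj ℓ (by omega)
  · exact (hD_mixed ℓ hty hry htk hrx hox hadj hty' hry' hrx' hox' hadj').elim
  · exact (hD_mixed ℓ hty' hry' htk' hrx' hox' hadj' hty hry hrx hox hadj).elim
  · obtain ⟨⟨b, rfl⟩, hcell, -⟩ := L2b ℓ hadj (by omega)
    obtain ⟨⟨b', rfl⟩, hcell', -⟩ := L2b ℓ hadj' (by omega)
    have c1 : ordOf ℓ x' < ordOf ℓ (Sum.inl b) := by omega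
    replace c1 := (ord_lt_iff ℓ _ _).mp c1
    have c2 : ordOf ℓ x < ordOf ℓ (Sum.inl b') := by omega
    replace c2 := (ord_lt_iff ℓ _ _).mp c2
    have hcc : cellOf ℓ (Sum.inl b) = cellOf ℓ (Sum.inl b') := by omega
    have hrr : rowOf ℓ (Sum.inl b) = rowOf ℓ (Sum.inl b') := by omega
    have hb1 : b.1.val = b'.1.val := hrr
    have hb2 : b.2.val = b'.2.val := hcc
    exact congrArg Sum.inl (Prod.ext (Fin.ext hb1) (Fin.ext hb2))

end Concrete


/-- Every subdivision of the `m × n` grid has twin-width at most `4`. -/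
theorem twinWidth_grid_subdivision (m n : ℕ) (hm : 1 ≤ m) (hn : 1 ≤ n)
    {β : Type*} [Fintype β] [DecidableEq β] (H : SimpleGraph β)
    (ℓ : Fin m × Fin n → Fin m × Fin n → ℕ)
    (hiso : Nonempty (H ≃g @Subdiv _ lexLT (gridGraph m n) ℓ)) :
    tww H ≤ 4 := by
  obtain ⟨e⟩ := hiso
  have key : TwwLE H 4 := by
    refine twwLE_of_sweep H (fun v => tkOf ℓ (e v)) (ρ := fun v => rowOf ℓ (e v))
      (ordv := fun v => ordOf ℓ (e v)) (m := m) hm ?_ ?_ ?_ ?_ ?_ ?_ ?_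
    · intro a b hab
      exact e.injective (ordOf_inj ℓ hab)
    · intro v
      exact rowOf_lt ℓ (e v)
    · intro i hi
      refine ⟨e.symm (Sum.inl (⟨i, hi⟩, ⟨0, hn⟩)), ?_⟩
      show rowOf ℓ (e (e.symm _)) = i
      erw [RelIso.apply_symm_apply]
      rfl
    · intro x y hadj
      exact adj_row ℓ (e.map_adj_iff.mpr hadj)
    · intro x y hadj hry
      exact adj_up ℓ (e.map_adj_iff.mpr hadj) hry
    · intro t i y y' h1 h2
      apply e.injective
      refine hC_subdiv ℓ t i (e y) (e y') ?_ ?_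
      · obtain ⟨a1, a2, a3, x, b1, b2, b3⟩ := h1
        exact ⟨a1, a2, a3, e x, b1, b2, e.map_adj_iff.mpr b3⟩
      · obtain ⟨a1, a2, a3, x, b1, b2, b3⟩ := h2
        exact ⟨a1, a2, a3, e x, b1, b2, e.map_adj_iff.mpr b3⟩
    · intro t i y y' h1 h2
      apply e.injective
      refine hD_subdiv ℓ t i (e y) (e y') ?_ ?_
      · obtain ⟨a1, a2, x, b1, b2, b3⟩ := h1
        exact ⟨a1, a2, e x, b1, b2, e.map_adj_iff.mpr b3⟩
      · obtain ⟨a1, a2, x, b1, b2, b3⟩ := h2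
        exact ⟨a1, a2, e x, b1, b2, e.map_adj_iff.mpr b3⟩
  exact Nat.sInf_le (show (4 : ℕ) ∈ {d | TwwLE H d} from key)

end TwwPaper
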